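/- Let U be a noninteracting set of species in a reaction network, σ a cycle in the multidigraph G_U, and r̃_σ the reduced reaction with reactant y = Σ_{e∈σ} ζ(y_{r(e)}) and product y' = Σ_{e∈σ} ζ(y'_{r(e)}). Then each species U_i ∈ U that is a node of σ appears exactly once as the U-part of the reactant and exactly once as the U-part of the product of the reactions r(e), e ∈ σ; consequently Σ_{e∈σ} ρ(y'_{r(e)} − y_{r(e)}) = 0 whenever σ does not contain the node *. -/
import Mathlib


/-- A multidigraph: a set of nodes `V`, a set of edges `E`, and source/target maps. -/
structure Multidigraph (V E : Type*) where
  src : E → V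
  tgt : E → V

namespace Multidigraph

variable {V E : Type*}

/-- One-step edge relation using only the edges in `τ`. -/
def Rel (G : Multidigraph V E) (τ : Set E) (a b : V) : Prop :=
  ∃ e ∈ τ, G.src e = a ∧ G.tgt e = b

/-- Undirected (symmetrized) one-step relation. -/
def URel (G : Multidigraph V E) (a b : V) : Prop :=
  G.Rel Set.univ a b ∨ G.Rel Set.univ b a

/-- Node set of the (weakly) connected component containing `v`. -/
def component (G : Multidigraph V E) (v : V) : Set V :=
  {w | Relation.ReflTransGen G.URel v w}

/-- `τ` is a spanning tree of the subgraph of `G` induced on the node set `W`,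
rooted at `r`: all edges stay inside `W`, every non-root node of `W` has exactly
one outgoing edge in `τ`, the root has none, and every node of `W` reaches `r`
through `τ`. -/
def IsSpanningTreeOn (G : Multidigraph V E) (W : Set V) (τ : Finset E) (r : V) : Prop :=
  (∀ e ∈ τ, G.src e ∈ W ∧ G.tgt e ∈ W) ∧
  (∀ v ∈ W, v ≠ r → ∃! e, e ∈ τ ∧ G.src e = v) ∧
  (∀ e ∈ τ, G.src e ≠ r) ∧
  (∀ v ∈ W, Relation.ReflTransGen (G.Rel (τ : Set E)) v r)

/-- Spanning tree of `G` rooted at `r`. -/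
def IsSpanningTree (G : Multidigraph V E) (τ : Finset E) (r : V) : Prop :=
  G.IsSpanningTreeOn Set.univ τ r

/-- A cycle: a nonempty closed directed path with pairwise distinct nodes. -/
def IsCycle (G : Multidigraph V E) (l : List E) : Prop :=
  l ≠ [] ∧ (l.map G.src).Nodup ∧
  l.Chain' (fun a b => G.tgt a = G.src b) ∧
  ∀ h : l ≠ [], G.tgt (l.getLast h) = G.src (l.head h)

def StronglyConnected (G : Multidigraph V E) : Prop :=
  ∀ a b : V, Relation.ReflTransGen (G.Rel Set.univ) a b

def Connected (G : Multidigraph V E) : Prop :=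
  ∀ a b : V, Relation.ReflTransGen G.URel a b

/-- Incidence matrix of a multidigraph. -/
def incidence [DecidableEq V] (G : Multidigraph V E) : Matrix V E ℝ := fun v e =>
  if G.tgt e = v ∧ G.src e ≠ v then 1
  else if G.src e = v ∧ G.tgt e ≠ v then (-1 : ℝ) else 0

end Multidigraph

/-- In a cycle `σ` of `G_U` not containing `*`, each species of
`U` that is a node of `σ` appears exactly once as the `U`-part of a reactant
and exactly once as the `U`-part of a product among the reactions of the
cycle; consequently `Σ_{e∈σ} ρ(y'_{r(e)} − y_{r(e)}) = 0`. -/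
private lemma stmt6_aux_map {R : Type} {m : ℕ} (f g : R → Fin m) :
    ∀ (rs : List R), rs ≠ [] → ∀ c : Fin m,
      rs.Chain' (fun a b => g a = f b) →
      (∀ h : rs ≠ [], g (rs.getLast h) = c) →
      rs.map g = (rs.map f).tail ++ [c]
  | [], h, _, _, _ => absurd rfl h
  | [a], _, c, _, hl => by simpa using hl (by simp)
  | a :: b :: t, _, c, hch, hl => by
      obtain ⟨h1, hch'⟩ := List.isChain_cons_cons.mp hch
      have ih := stmt6_aux_map f g (b :: t) (by simp) c hch'
        (fun h => by simpa [List.getLast_cons] using hl (by simp))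
      simp only [List.map_cons, List.tail_cons] at ih ⊢
      rw [ih, h1]
      simp

private lemma stmt6_sum_map_sub {R : Type} {M : Type*} [AddCommGroup M]
    (u v : R → M) : ∀ (l : List R),
      (l.map (fun r => u r - v r)).sum = (l.map u).sum - (l.map v).sum
  | [] => by simp
  | a :: t => by simp [stmt6_sum_map_sub u v t]; abel

theorem stmt6 {p m : ℕ} {R : Type}
    (y y' : R → (Fin p → ℝ) × (Fin m → ℝ))
    (rs : List R) (hne : rs ≠ [])
    (f g : R → Fin m)
    (hf : ∀ r ∈ rs, (y r).2 = Pi.single (f r) 1)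
    (hg : ∀ r ∈ rs, (y' r).2 = Pi.single (g r) 1)
    (hchain : rs.Chain' (fun a b => g a = f b))
    (hwrap : g (rs.getLast hne) = f (rs.head hne))
    (hnodup : (rs.map f).Nodup) :
    (∀ j : Fin m, j ∈ rs.map f →
      (rs.map f).count j = 1 ∧ (rs.map g).count j = 1) ∧
    (rs.map (fun r => (y' r).2 - (y r).2)).sum = 0 := by
  obtain ⟨a, t, rfl⟩ := List.exists_cons_of_ne_nil hne
  have hmap : (a :: t).map g = ((a :: t).map f).tail ++ [f ((a :: t).head hne)] :=
    stmt6_aux_map f g (a :: t) hne _ hchain (fun _ => hwrap)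
  simp only [List.head_cons, List.map_cons, List.tail_cons] at hmap
  have hperm : List.Perm ((a :: t).map g) ((a :: t).map f) := by
    rw [List.map_cons, hmap]
    exact List.perm_append_comm
  constructor
  · intro j hj
    have h1 : ((a :: t).map f).count j = 1 := List.count_eq_one_of_mem hnodup hj
    exact ⟨h1, by rw [hperm.count_eq]; exact h1⟩
  · have hcong : (a :: t).map (fun r => (y' r).2 - (y r).2)
        = (a :: t).map (fun r => Pi.single (g r) (1:ℝ) - Pi.single (f r) 1) :=
      List.map_congr_left (fun r hr => by rw [hf r hr, hg r hr])
    rw [hcong, stmt6_sum_map_sub]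
    have : (a :: t).map (fun r => Pi.single (g r) (1:ℝ))
        = ((a :: t).map g).map (fun j => Pi.single j (1:ℝ)) := by
      rw [List.map_map]; rfl
    rw [this, (hperm.map (fun j => Pi.single j (1:ℝ))).sum_eq, List.map_map]
    simp [Function.comp_def]
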